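/- Let (X,E) and (Y,F) be measurable spaces, let f : (X,E) → (Y,F) be exactly measurable, and let ν be a measure on (Y,F). Then there exists a measure μ on (X,E) with ν = μ∘f⁻¹ (i.e., ν(F') = μ(f⁻¹(F')) for all F' ∈ F) if and only if f(X) is thick with respect to ν. Moreover, if such a measure μ exists then it is unique. -/

import Mathlib

open MeasureTheory

/-- A map `f : (X,E) → (Y,F)` between measurable spaces is *exactly measurable* if
`f⁻¹(F) = E`. -/
def ExactlyMeasurable {X Y : Type*} [mX : MeasurableSpace X] [mY : MeasurableSpace Y]
    (f : X → Y) : Prop :=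
  MeasurableSpace.comap f mY = mX

/-- Let `f : (X,E) → (Y,F)` be exactly measurable and `ν` a measure on `(Y,F)`.
Then there exists a measure `μ` on `(X,E)` with `ν = μ ∘ f⁻¹` (i.e. `ν(F') = μ(f⁻¹(F'))`
for all `F' ∈ F`) if and only if `f(X)` is thick with respect to `ν` (i.e. `ν(F') = 0`
whenever `F' ∈ F` is disjoint from `f(X)`).  Moreover such a `μ`, if it exists,
is unique. -/
theorem stmt9 {X Y : Type*} [MeasurableSpace X] [MeasurableSpace Y]
    (f : X → Y) (hf : ExactlyMeasurable f) (ν : Measure Y) :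
    ((∃ μ : Measure X, ∀ F' : Set Y, MeasurableSet F' → ν F' = μ (f ⁻¹' F')) ↔
      (∀ F' : Set Y, MeasurableSet F' → F' ∩ Set.range f = ∅ → ν F' = 0)) ∧
    (∀ μ₁ μ₂ : Measure X,
      (∀ F' : Set Y, MeasurableSet F' → ν F' = μ₁ (f ⁻¹' F')) →
      (∀ F' : Set Y, MeasurableSet F' → ν F' = μ₂ (f ⁻¹' F')) → μ₁ = μ₂) := by
  have hpre : ∀ S : Set X, MeasurableSet S →
      ∃ F' : Set Y, MeasurableSet F' ∧ f ⁻¹' F' = S := by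
    intro S hS
    rw [← hf] at hS
    exact hS
  constructor
  · constructor
    · rintro ⟨μ, hμ⟩ F' hF' hdisj
      have hpe : f ⁻¹' F' = ∅ := by
        ext x
        simp only [Set.mem_preimage, Set.mem_empty_iff_false, iff_false]
        intro hx
        have : f x ∈ F' ∩ Set.range f := ⟨hx, ⟨x, rfl⟩⟩
        rw [hdisj] at this
        exact this
      rw [hμ F' hF', hpe]
      simp
    · intro h
      -- key: ν vanishes on measurable sets whose preimage is empty
      have hnull : ∀ A B : Set Y, MeasurableSet A → MeasurableSet B →
          f ⁻¹' A ⊆ f ⁻¹' B → ν (A \ B) = 0 := by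
        intro A B hA hB hsub
        apply h _ (hA.diff hB)
        ext y
        simp only [Set.mem_inter_iff, Set.mem_diff, Set.mem_range,
          Set.mem_empty_iff_false, iff_false, not_and]
        rintro ⟨hyA, hyB⟩ ⟨x, rfl⟩
        exact hyB (hsub hyA)
      have hagree : ∀ A B : Set Y, MeasurableSet A → MeasurableSet B →
          f ⁻¹' A = f ⁻¹' B → ν A = ν B := by
        intro A B hA hB hAB
        refine measure_congr ?_
        rw [MeasureTheory.ae_eq_set]
        exact ⟨hnull A B hA hB hAB.le, hnull B A hB hA hAB.symm.le⟩
      set m : ∀ S : Set X, MeasurableSet S → ENNReal :=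
        fun S hS => ν ((hpre S hS).choose) with hm
      have hmval : ∀ (S : Set X) (hS : MeasurableSet S) (F' : Set Y),
          MeasurableSet F' → f ⁻¹' F' = S → m S hS = ν F' := by
        intro S hS F' hF' hFS
        apply hagree _ _ (hpre S hS).choose_spec.1 hF'
        rw [(hpre S hS).choose_spec.2, hFS]
      have h0 : m ∅ MeasurableSet.empty = 0 := by
        rw [hmval ∅ MeasurableSet.empty ∅ MeasurableSet.empty (by simp)]
        simp
      have hadd : ∀ (s : ℕ → Set X) (hs : ∀ i, MeasurableSet (s i)),
          Pairwise (Function.onFun Disjoint s) →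
          m (⋃ i, s i) (MeasurableSet.iUnion hs) = ∑' i, m (s i) (hs i) := by
        intro s hs hdisj
        set F : ℕ → Set Y := fun i => (hpre (s i) (hs i)).choose with hF
        have hFm : ∀ i, MeasurableSet (F i) := fun i => (hpre (s i) (hs i)).choose_spec.1
        have hFp : ∀ i, f ⁻¹' F i = s i := fun i => (hpre (s i) (hs i)).choose_spec.2
        have hU : m (⋃ i, s i) (MeasurableSet.iUnion hs) = ν (⋃ i, F i) := by
          refine hmval _ (MeasurableSet.iUnion hs) _ (MeasurableSet.iUnion hFm) ?_
          rw [Set.preimage_iUnion]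
          exact Set.iUnion_congr hFp
        rw [hU]
        apply measure_iUnion₀
        · intro i j hij
          have : ν (F i ∩ F j) = 0 := by
            apply h _ ((hFm i).inter (hFm j))
            ext y
            simp only [Set.mem_inter_iff, Set.mem_range, Set.mem_empty_iff_false,
              iff_false, not_and]
            rintro ⟨hyi, hyj⟩ ⟨x, rfl⟩
            have hx1 : x ∈ s i := by rw [← hFp i]; exact hyi
            have hx2 : x ∈ s j := by rw [← hFp j]; exact hyj
            exact Set.disjoint_left.mp (hdisj hij) hx1 hx2
          exact this
        · exact fun i => (hFm i).nullMeasurableSet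
      refine ⟨Measure.ofMeasurable m h0 hadd, ?_⟩
      intro F' hF'
      have hmble : MeasurableSet (f ⁻¹' F') := by
        rw [← hf]; exact ⟨F', hF', rfl⟩
      rw [Measure.ofMeasurable_apply _ hmble, hmval _ hmble F' hF' rfl]
  · intro μ₁ μ₂ h₁ h₂
    ext S hS
    obtain ⟨F', hF', rfl⟩ := hpre S hS
    rw [← h₁ F' hF', h₂ F' hF']
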